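/- arXiv:1808.04192 — 2 statements merged into one kernel-verified Lean document; each statement's English description precedes it below -/
import Mathlib

section
/- Let n ≥ 1, m ∈ ℝ, let U ⊆ (ℝ²)ⁿ be open, and let ψ be a C¹ n-particle multi-time wave function on U whose components satisfy, for every k = 1,…,n and every spin index (s₁,…,sₙ) ∈ {−1,+1}ⁿ, the free multi-time Dirac equation with mass m in the representation γ⁰ = σ₁, γ¹ = σ₁σ₃: i(∂_{t_k} − s_k ∂_{z_k}) ψ_{s₁…sₙ} = m ψ_{s₁…s_{k−1},(−s_k),s_{k+1}…sₙ}. Then for every k and all fixed μ_j ∈ {0,1} (j ≠ k), the tensor current satisfies ∂_{t_k} j^{(μ₁,…,μ_{k−1},0,μ_{k+1},…,μₙ)} + ∂_{z_k} j^{(μ₁,…,μ_{k−1},1,μ_{k+1},…,μₙ)} = 0 on U. -/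
open scoped BigOperators
open MeasureTheory

noncomputable section

/-- spin value: `false` ↦ −1, `true` ↦ +1 -/
def sval (b : Bool) : ℝ := if b then 1 else -1

/-- ordered spacelike configurations 𝒮₁⁽ⁿ⁾ -/
def Sconf (n : ℕ) : Set (Fin n → ℝ × ℝ) :=
  {x | (∀ i j, i ≠ j → ((x i).1 - (x j).1) ^ 2 < ((x i).2 - (x j).2) ^ 2) ∧
       ∀ i j, i < j → (x i).2 < (x j).2}

/-- ordered spatial configurations Zₙ -/
def Zconf (n : ℕ) : Set (Fin n → ℝ) := {z | ∀ i j : Fin n, i < j → z i < z j}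

/-- partial derivative ∂_{t_k} (within the set `S`) -/
def dT {n : ℕ} {F : Type*} [NormedAddCommGroup F] [NormedSpace ℝ F]
    (S : Set (Fin n → ℝ × ℝ)) (f : (Fin n → ℝ × ℝ) → F) (k : Fin n)
    (x : Fin n → ℝ × ℝ) : F :=
  fderivWithin ℝ f S x (Pi.single k ((1 : ℝ), (0 : ℝ)))

/-- partial derivative ∂_{z_k} (within the set `S`) -/
def dZ {n : ℕ} {F : Type*} [NormedAddCommGroup F] [NormedSpace ℝ F]
    (S : Set (Fin n → ℝ × ℝ)) (f : (Fin n → ℝ × ℝ) → F) (k : Fin n)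
    (x : Fin n → ℝ × ℝ) : F :=
  fderivWithin ℝ f S x (Pi.single k ((0 : ℝ), (1 : ℝ)))

/-- partial derivative ∂_{z_k} for functions of spatial variables only -/
def dZr {n : ℕ} {F : Type*} [NormedAddCommGroup F] [NormedSpace ℝ F]
    (S : Set (Fin n → ℝ)) (f : (Fin n → ℝ) → F) (k : Fin n) (z : Fin n → ℝ) : F :=
  fderivWithin ℝ f S z (Pi.single k (1 : ℝ))

/-- C¹ functions on `S` that are bounded with bounded derivative -/
def C1bOn {E F : Type*} [NormedAddCommGroup E] [NormedSpace ℝ E]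
    [NormedAddCommGroup F] [NormedSpace ℝ F] (S : Set E) (f : E → F) : Prop :=
  ContDiffOn ℝ 1 f S ∧ (∃ C, ∀ x ∈ S, ‖f x‖ ≤ C) ∧ ∃ C, ∀ x ∈ S, ‖fderivWithin ℝ f S x‖ ≤ C

/-- the collision configuration (x₁,…,x_k,x_k,…,xₙ) -/
def double {n : ℕ} {α : Type*} (k : Fin n) (x : Fin n → α) : Fin (n + 1) → α :=
  Fin.insertNth k.castSucc (x k) x

/-- the index tuple (s₁,…,s_{k−1},a,b,s_{k+1},…,sₙ) -/
def pairIns {n : ℕ} {α : Type*} (k : Fin n) (s : Fin n → α) (a b : α) : Fin (n + 1) → α :=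
  Fin.insertNth k.castSucc a (Function.update s k b)

/-- the Dirac tensor current j^{μ₁…μₙ}; `μ i = true` means μᵢ = 1 -/
def current {n : ℕ} (ψ : (Fin n → ℝ × ℝ) → (Fin n → Bool) → ℂ) (μ : Fin n → Bool)
    (x : Fin n → ℝ × ℝ) : ℝ :=
  ∑ s : Fin n → Bool, Complex.normSq (ψ x s) * ∏ i, (if μ i then -(sval (s i)) else 1)


/-- The free massive multi-time Dirac equations (in the representation
γ⁰ = σ₁, γ¹ = σ₁σ₃, where the mass term flips the k-th spin index) imply that each
tensor-current divergence in the k-th particle variable vanishes. -/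
theorem tensor_current_conservation_free_dirac
    (n : ℕ) (hn : 1 ≤ n) (m : ℝ) (U : Set (Fin n → ℝ × ℝ)) (hU : IsOpen U)
    (ψ : (Fin n → ℝ × ℝ) → (Fin n → Bool) → ℂ)
    (hreg : ∀ s : Fin n → Bool, ContDiffOn ℝ 1 (fun x => ψ x s) U)
    (heq : ∀ (k : Fin n) (s : Fin n → Bool), ∀ x ∈ U,
      Complex.I * (dT U (fun y => ψ y s) k x
          - (sval (s k) : ℂ) * dZ U (fun y => ψ y s) k x)
        = (m : ℂ) * ψ x (Function.update s k (!(s k)))) :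
    ∀ (k : Fin n) (μ : Fin n → Bool), ∀ x ∈ U,
      dT U (current ψ (Function.update μ k false)) k x
        + dZ U (current ψ (Function.update μ k true)) k x = 0 := by
  intro k μ x hx
  classical
  have hud : UniqueDiffWithinAt ℝ U x := hU.uniqueDiffWithinAt hx
  set et : Fin n → ℝ × ℝ := Pi.single k ((1:ℝ), (0:ℝ)) with het
  set ez : Fin n → ℝ × ℝ := Pi.single k ((0:ℝ), (1:ℝ)) with hez
  set D : (Fin n → Bool) → ((Fin n → ℝ × ℝ) →L[ℝ] ℂ) :=
    fun s => fderivWithin ℝ (fun y => ψ y s) U x with hD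
  have hdiff : ∀ s, HasFDerivWithinAt (fun y => ψ y s) (D s) U x := fun s =>
    (((hreg s).differentiableOn one_ne_zero) x hx).hasFDerivWithinAt
  set w : (Fin n → Bool) → (Fin n → Bool) → ℝ :=
    fun ν s => ∏ i, (if ν i then -(sval (s i)) else 1) with hw
  set L : (Fin n → Bool) → ((Fin n → ℝ × ℝ) →L[ℝ] ℝ) := fun s =>
    (2 * (ψ x s).re) • (Complex.reCLM.comp (D s)) +
      (2 * (ψ x s).im) • (Complex.imCLM.comp (D s)) with hL
  have hns : ∀ s, HasFDerivWithinAt (fun y => Complex.normSq (ψ y s)) (L s) U x := by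
    intro s
    have h1 : HasFDerivWithinAt (fun y => (ψ y s).re) (Complex.reCLM.comp (D s)) U x :=
      (Complex.reCLM.hasFDerivAt).comp_hasFDerivWithinAt x (hdiff s)
    have h2 : HasFDerivWithinAt (fun y => (ψ y s).im) (Complex.imCLM.comp (D s)) U x :=
      (Complex.imCLM.hasFDerivAt).comp_hasFDerivWithinAt x (hdiff s)
    have h3 := (h1.mul h1).add (h2.mul h2)
    have hfun : (fun y => Complex.normSq (ψ y s))
        = fun y => (ψ y s).re * (ψ y s).re + (ψ y s).im * (ψ y s).im := by
      funext y; exact Complex.normSq_apply _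
    rw [hfun]
    refine h3.congr_fderiv ?_
    ext v
    simp only [hL, ContinuousLinearMap.add_apply, ContinuousLinearMap.smul_apply,
      smul_eq_mul]
    ring
  have hcur : ∀ ν : Fin n → Bool, HasFDerivWithinAt (current ψ ν)
      (∑ s : Fin n → Bool, w ν s • L s) U x := by
    intro ν
    have : HasFDerivWithinAt (fun y => ∑ s : Fin n → Bool, Complex.normSq (ψ y s) * w ν s)
        (∑ s : Fin n → Bool, w ν s • L s) U x :=
      HasFDerivWithinAt.fun_sum (fun s _ => (hns s).mul_const (w ν s))
    exact this
  have happ : ∀ (ν : Fin n → Bool) (v : Fin n → ℝ × ℝ),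
      fderivWithin ℝ (current ψ ν) U x v = ∑ s : Fin n → Bool, w ν s * L s v := by
    intro ν v
    rw [(hcur ν).fderivWithin hud]
    simp [ContinuousLinearMap.sum_apply]
  have hT : dT U (current ψ (Function.update μ k false)) k x
      = ∑ s : Fin n → Bool, w (Function.update μ k false) s * L s et :=
    happ _ et
  have hZg : dZ U (current ψ (Function.update μ k true)) k x
      = ∑ s : Fin n → Bool, w (Function.update μ k true) s * L s ez :=
    happ _ ez
  set c : (Fin n → Bool) → ℝ :=
    fun s => ∏ i ∈ Finset.univ.erase k, (if μ i then -(sval (s i)) else 1) with hc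
  have hwb : ∀ (b : Bool) (s : Fin n → Bool), w (Function.update μ k b) s
      = (if b then -(sval (s k)) else 1) * c s := by
    intro b s
    simp only [hw]
    rw [← Finset.mul_prod_erase Finset.univ _ (Finset.mem_univ k)]
    congr 1
    · rw [Function.update_self]
    · exact Finset.prod_congr rfl fun i hi => by
        rw [Function.update_of_ne (Finset.ne_of_mem_erase hi)]
  have hw0 : ∀ s, w (Function.update μ k false) s = c s := fun s => by
    rw [hwb]; simp
  have hw1 : ∀ s, w (Function.update μ k true) s = -(sval (s k)) * c s := fun s => by
    rw [hwb]; simp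
  set flip : (Fin n → Bool) → (Fin n → Bool) :=
    fun s => Function.update s k (!(s k)) with hflip
  have hflipflip : ∀ s, flip (flip s) = s := by
    intro s
    simp [hflip, Function.update_self, Function.update_idem]
  have hcflip : ∀ s, c (flip s) = c s := by
    intro s
    exact Finset.prod_congr rfl fun i hi => by
      simp only [hflip, Function.update_of_ne (Finset.ne_of_mem_erase hi)]
  have hP : ∀ s : Fin n → Bool, D s et - (sval (s k) : ℂ) * D s ez
      = -Complex.I * ((m : ℂ) * ψ x (flip s)) := by
    intro s
    have h : Complex.I * (D s et - (sval (s k) : ℂ) * D s ez)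
        = (m : ℂ) * ψ x (Function.update s k (!(s k))) := heq k s x hx
    have hfl : flip s = Function.update s k (!(s k)) := rfl
    rw [hfl]
    linear_combination (-Complex.I) * h
      + ((D s) et - (sval (s k) : ℂ) * (D s) ez) * Complex.I_sq
  have hLapp : ∀ (s : Fin n → Bool) (v : Fin n → ℝ × ℝ),
      L s v = 2 * (ψ x s).re * (D s v).re + 2 * (ψ x s).im * (D s v).im := by
    intro s v
    simp only [hL, ContinuousLinearMap.add_apply, ContinuousLinearMap.smul_apply,
      smul_eq_mul, ContinuousLinearMap.coe_comp', Function.comp_apply,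
      Complex.reCLM_apply, Complex.imCLM_apply]
  have key : ∀ s : Fin n → Bool,
      w (Function.update μ k false) s * L s et + w (Function.update μ k true) s * L s ez
      = c s * (2 * m * ((ψ x s).re * (ψ x (flip s)).im - (ψ x s).im * (ψ x (flip s)).re)) := by
    intro s
    have hre := congrArg Complex.re (hP s)
    have him := congrArg Complex.im (hP s)
    simp only [Complex.sub_re, Complex.sub_im, Complex.mul_re, Complex.mul_im,
      Complex.ofReal_re, Complex.ofReal_im, Complex.neg_re, Complex.neg_im,
      Complex.I_re, Complex.I_im] at hre him
    rw [hw0, hw1, hLapp, hLapp]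
    linear_combination (2 * (ψ x s).re * c s) * hre + (2 * (ψ x s).im * c s) * him
  rw [hT, hZg, ← Finset.sum_add_distrib]
  rw [Finset.sum_congr rfl fun s _ => key s]
  refine Finset.sum_ninvolution flip (fun s => ?_) (fun s _ => ?_)
    (fun s => Finset.mem_univ _) hflipflip
  · rw [hcflip, hflipflip]
    ring
  · intro h
    have := congrFun h k
    simp [hflip, Function.update_self] at this
end
end

section
/- Let N ≥ 2, θ ∈ ℝ, let A ∈ ℂ^{2×4} be of IBC form with associated row vector B, and let (ψ⁽¹⁾,…,ψ⁽ᴺ⁾) be a family of C¹ multi-time wave functions on the closures of the domains 𝒮₁⁽ⁿ⁾ satisfying the multi-time equations i(∂_{t_k} − s_k∂_{z_k})ψ⁽ⁿ⁾_{s₁…sₙ} = f⁽ⁿ⁾_{k,s₁…sₙ} with the model source terms, and the interior-boundary conditions. Then the tensor currents j^{(n)} of the ψ⁽ⁿ⁾ satisfy local probability conservation in coordinates: (i) for every k = 1,…,N and all fixed μ_j ∈ {0,1} (j≠k): ∂_{t_k} j^{(N),(…,μ_k=0,…)} + ∂_{z_k} j^{(N),(…,μ_k=1,…)} = 0 on 𝒮₁⁽ᴺ⁾;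 and (ii) for every n = 1,…,N−1, k = 1,…,n, all fixed μ_j (j≠k) and all (x₁,…,xₙ) ∈ 𝒮₁⁽ⁿ⁾: j^{(n+1),(μ₁,…,μ_{k−1},0,1,μ_{k+1},…,μₙ)}(x₁,…,x_k,x_k,…,xₙ) − j^{(n+1),(μ₁,…,μ_{k−1},1,0,μ_{k+1},…,μₙ)}(x₁,…,x_k,x_k,…,xₙ) = (−1)^k ( ∂_{t_k} j^{(n),(…,μ_k=0,…)} + ∂_{z_k} j^{(n),(…,μ_k=1,…)} )(x₁,…,xₙ). -/
open scoped BigOperators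
open MeasureTheory

noncomputable section

/-- `A` is of IBC form: A_s^{tu} = 0 for t = u and the matrix Ã of conjugated entries
(row (−+): ((A₋^{−+})*, (A₊^{−+})*), row (+−): ((A₋^{+−})*, (A₊^{+−})*)) has the
rank-one form [[w₁,w₂],[w₁e^{iφ},w₂e^{iφ}]]. -/
def IBCform (A : Bool → Bool × Bool → ℂ) : Prop :=
  (∀ s t : Bool, A s (t, t) = 0) ∧
    ∃ (w₁ w₂ : ℂ) (φ : ℝ),
      (starRingEnd ℂ) (A false (false, true)) = w₁ ∧
      (starRingEnd ℂ) (A true (false, true)) = w₂ ∧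
      (starRingEnd ℂ) (A false (true, false)) = w₁ * Complex.exp (φ * Complex.I) ∧
      (starRingEnd ℂ) (A true (true, false)) = w₂ * Complex.exp (φ * Complex.I)

/-- the row vector B = (1/2i)(1, e^{iθ})Ã associated with `A` and the phase θ -/
def Bof (θ : ℝ) (A : Bool → Bool × Bool → ℂ) (s : Bool) : ℂ :=
  (1 / (2 * Complex.I)) *
    ((starRingEnd ℂ) (A s (false, true))
      + Complex.exp (θ * Complex.I) * (starRingEnd ℂ) (A s (true, false)))

/-! auxiliary lemmas -/

lemma isOpen_Sconf (n : ℕ) : IsOpen (Sconf n) := by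
  have hrepr : Sconf n = ⋂ p : Fin n × Fin n,
      ({x : Fin n → ℝ × ℝ |
          p.1 ≠ p.2 → ((x p.1).1 - (x p.2).1) ^ 2 < ((x p.1).2 - (x p.2).2) ^ 2}
        ∩ {x : Fin n → ℝ × ℝ | p.1 < p.2 → (x p.1).2 < (x p.2).2}) := by
    ext x
    simp only [Sconf, Set.mem_iInter, Set.mem_inter_iff, Set.mem_setOf_eq, Prod.forall]
    constructor
    · rintro ⟨h1, h2⟩ i j; exact ⟨h1 i j, h2 i j⟩
    · intro h; exact ⟨fun i j => (h i j).1, fun i j => (h i j).2⟩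
  rw [hrepr]
  refine isOpen_iInter_of_finite fun p => IsOpen.inter ?_ ?_
  · by_cases hp : p.1 ≠ p.2
    · have : {x : Fin n → ℝ × ℝ |
          p.1 ≠ p.2 → ((x p.1).1 - (x p.2).1) ^ 2 < ((x p.1).2 - (x p.2).2) ^ 2}
          = {x : Fin n → ℝ × ℝ | ((x p.1).1 - (x p.2).1) ^ 2 < ((x p.1).2 - (x p.2).2) ^ 2} := by
        ext x; simp [hp]
      rw [this]
      exact isOpen_lt (by fun_prop) (by fun_prop)
    · have : {x : Fin n → ℝ × ℝ |
          p.1 ≠ p.2 → ((x p.1).1 - (x p.2).1) ^ 2 < ((x p.1).2 - (x p.2).2) ^ 2}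
          = Set.univ := by
        ext x; simp [hp]
      rw [this]; exact isOpen_univ
  · by_cases hp : p.1 < p.2
    · have : {x : Fin n → ℝ × ℝ | p.1 < p.2 → (x p.1).2 < (x p.2).2}
          = {x : Fin n → ℝ × ℝ | (x p.1).2 < (x p.2).2} := by
        ext x; simp [hp]
      rw [this]
      exact isOpen_lt (by fun_prop) (by fun_prop)
    · have : {x : Fin n → ℝ × ℝ | p.1 < p.2 → (x p.1).2 < (x p.2).2} = Set.univ := by
        ext x; simp [hp]
      rw [this]; exact isOpen_univ

lemma closure_Sconf_mem_nhds {n : ℕ} {x : Fin n → ℝ × ℝ} (hx : x ∈ Sconf n) :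
    closure (Sconf n) ∈ nhds x :=
  Filter.mem_of_superset ((isOpen_Sconf n).mem_nhds hx) subset_closure

lemma re_ofReal_mul' (r : ℝ) (w : ℂ) : ((r : ℂ) * w).re = r * w.re := by
  simp [Complex.mul_re]

lemma normSq_hasFDerivAt {E : Type*} [NormedAddCommGroup E] [NormedSpace ℝ E]
    {g : E → ℂ} {G : E →L[ℝ] ℂ} {x : E} (hg : HasFDerivAt g G x) :
    HasFDerivAt (fun y => Complex.normSq (g y))
      ((2 * (g x).re) • (Complex.reCLM.comp G) + (2 * (g x).im) • (Complex.imCLM.comp G)) x := by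
  have hre : HasFDerivAt (fun y => (g y).re) (Complex.reCLM.comp G) x :=
    (Complex.reCLM.hasFDerivAt).comp x hg
  have him : HasFDerivAt (fun y => (g y).im) (Complex.imCLM.comp G) x :=
    (Complex.imCLM.hasFDerivAt).comp x hg
  have h := (hre.mul hre).add (him.mul him)
  have hfun : (fun y => Complex.normSq (g y))
      = fun y => (g y).re * (g y).re + (g y).im * (g y).im := by
    funext y; rw [Complex.normSq_apply]
  rw [hfun]
  refine h.congr_fderiv ?_
  ext v
  simp only [ContinuousLinearMap.add_apply, ContinuousLinearMap.smul_apply, smul_eq_mul,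
    ContinuousLinearMap.comp_apply, Complex.reCLM_apply, Complex.imCLM_apply]
  ring

set_option maxHeartbeats 1000000 in
lemma deriv_current_eval {n : ℕ} (ψn : (Fin n → ℝ × ℝ) → (Fin n → Bool) → ℂ)
    (hreg : ∀ s : Fin n → Bool, ContDiffOn ℝ 1 (fun x => ψn x s) (closure (Sconf n)))
    (μ : Fin n → Bool) {x : Fin n → ℝ × ℝ} (hx : x ∈ Sconf n) (w : ℝ × ℝ) (k : Fin n) :
    fderivWithin ℝ (current ψn μ) (closure (Sconf n)) x (Pi.single k w)
      = ∑ s : Fin n → Bool, (∏ i, (if μ i then -(sval (s i)) else 1)) *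
          (2 * ((starRingEnd ℂ) (ψn x s) *
            fderivWithin ℝ (fun y => ψn y s) (closure (Sconf n)) x (Pi.single k w)).re) := by
  have hS : closure (Sconf n) ∈ nhds x := closure_Sconf_mem_nhds hx
  have hψ : ∀ s : Fin n → Bool,
      HasFDerivAt (fun y => ψn y s) (fderiv ℝ (fun y => ψn y s) x) x := fun s =>
    (((hreg s).contDiffAt hS).differentiableAt one_ne_zero).hasFDerivAt
  have hterm : ∀ s : Fin n → Bool,
      HasFDerivAt (fun y => Complex.normSq (ψn y s) * ∏ i, (if μ i then -(sval (s i)) else 1))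
        ((∏ i, (if μ i then -(sval (s i)) else 1)) •
          ((2 * (ψn x s).re) • (Complex.reCLM.comp (fderiv ℝ (fun y => ψn y s) x))
            + (2 * (ψn x s).im) • (Complex.imCLM.comp (fderiv ℝ (fun y => ψn y s) x)))) x :=
    fun s => (normSq_hasFDerivAt (hψ s)).mul_const _
  have hsum := HasFDerivAt.sum (u := Finset.univ) (fun (s : Fin n → Bool) _ => hterm s)
  have hcur : HasFDerivAt (current ψn μ)
      (∑ s : Fin n → Bool, (∏ i, (if μ i then -(sval (s i)) else 1)) •
          ((2 * (ψn x s).re) • (Complex.reCLM.comp (fderiv ℝ (fun y => ψn y s) x))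
            + (2 * (ψn x s).im) • (Complex.imCLM.comp (fderiv ℝ (fun y => ψn y s) x)))) x := by
    have e : current ψn μ = ∑ s : Fin n → Bool,
        fun y => Complex.normSq (ψn y s) * ∏ i, (if μ i then -(sval (s i)) else 1) := by
      funext y; simp only [current, Finset.sum_apply]
    rw [e]; exact hsum
  rw [fderivWithin_of_mem_nhds hS, hcur.fderiv, ContinuousLinearMap.sum_apply]
  refine Finset.sum_congr rfl fun s _ => ?_
  rw [fderivWithin_of_mem_nhds hS]
  simp only [ContinuousLinearMap.smul_apply, ContinuousLinearMap.add_apply,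
    ContinuousLinearMap.comp_apply, Complex.reCLM_apply, Complex.imCLM_apply, smul_eq_mul,
    Complex.mul_re, Complex.conj_re, Complex.conj_im]
  ring

lemma prod_if_update {n : ℕ} (μ : Fin n → Bool) (k : Fin n) (b : Bool) (s : Fin n → Bool) :
    (∏ i, (if Function.update μ k b i then -(sval (s i)) else 1))
      = (if b then -(sval (s k)) else 1) *
          ∏ i ∈ Finset.univ.erase k, (if μ i then -(sval (s i)) else 1) := by
  rw [← Finset.mul_prod_erase Finset.univ _ (Finset.mem_univ k), Function.update_self]
  congr 1
  refine Finset.prod_congr rfl fun i hi => ?_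
  rw [Function.update_of_ne (Finset.ne_of_mem_erase hi)]

lemma prod_erase_update {n : ℕ} (μ : Fin n → Bool) (k : Fin n) (b : Bool) (s : Fin n → Bool) :
    (∏ i ∈ Finset.univ.erase k, (if μ i then -(sval (Function.update s k b i)) else 1))
      = ∏ i ∈ Finset.univ.erase k, (if μ i then -(sval (s i)) else 1) :=
  Finset.prod_congr rfl fun i hi => by rw [Function.update_of_ne (Finset.ne_of_mem_erase hi)]

def flipEquiv {n : ℕ} (k : Fin n) : ((Fin n → Bool) × Bool) ≃ ((Fin n → Bool) × Bool) where
  toFun p := (Function.update p.1 k p.2, p.1 k)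
  invFun p := (Function.update p.1 k p.2, p.1 k)
  left_inv p := by
    obtain ⟨s, b⟩ := p
    simp [Function.update_idem, Function.update_eq_self, Function.update_self]
  right_inv p := by
    obtain ⟨s, b⟩ := p
    simp [Function.update_idem, Function.update_eq_self, Function.update_self]

lemma sum_double {n : ℕ} (k : Fin n) (F : (Fin n → Bool) → ℝ) :
    2 * ∑ s : Fin n → Bool, F s
      = ∑ s : Fin n → Bool, ∑ b : Bool, F (Function.update s k b) := by
  have h : ∑ p : (Fin n → Bool) × Bool, F p.1
      = ∑ p : (Fin n → Bool) × Bool, F (Function.update p.1 k p.2) := by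
    rw [← Equiv.sum_comp (flipEquiv k) (fun p => F (Function.update p.1 k p.2))]
    refine Finset.sum_congr rfl fun p _ => ?_
    obtain ⟨s, b⟩ := p
    simp [flipEquiv, Function.update_idem, Function.update_eq_self]
  have h2 : ∑ p : (Fin n → Bool) × Bool, F p.1 = 2 * ∑ s : Fin n → Bool, F s := by
    rw [Fintype.sum_prod_type]
    simp only [Finset.sum_const, Finset.card_univ, Fintype.card_bool, smul_eq_mul,
      Finset.mul_sum]
    exact Finset.sum_congr rfl fun s _ => by ring
  have h3 : ∑ p : (Fin n → Bool) × Bool, F (Function.update p.1 k p.2)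
      = ∑ s : Fin n → Bool, ∑ b : Bool, F (Function.update s k b) := by
    rw [Fintype.sum_prod_type]
  rw [← h3, ← h, h2]

lemma sum_pair_expand {n : ℕ} (g : (Fin (n + 1) → Bool) → ℂ) (k : Fin n) (μ : Fin n → Bool)
    (a b : Bool) :
    (∑ T : Fin (n + 1) → Bool,
        Complex.normSq (g T) * ∏ j, (if pairIns k μ a b j then -(sval (T j)) else 1))
      = ∑ s : Fin n → Bool, ∑ t : Bool,
          Complex.normSq (g (Fin.insertNth k.castSucc t s)) *
            ((if a then -(sval t) else 1) * ((if b then -(sval (s k)) else 1) *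
              ∏ i ∈ Finset.univ.erase k, (if μ i then -(sval (s i)) else 1))) := by
  rw [← Equiv.sum_comp (Fin.insertNthEquiv (fun _ => Bool) k.castSucc)
      (fun T => Complex.normSq (g T) * ∏ j, (if pairIns k μ a b j then -(sval (T j)) else 1))]
  rw [Fintype.sum_prod_type]
  rw [Finset.sum_comm]
  refine Finset.sum_congr rfl fun s _ => Finset.sum_congr rfl fun t _ => ?_
  simp only [Fin.insertNthEquiv_apply]
  congr 1
  rw [Fin.prod_univ_succAbove _ k.castSucc]
  simp only [pairIns, Fin.insertNth_apply_same, Fin.insertNth_apply_succAbove]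
  rw [prod_if_update]

lemma core_identity (z y wF wT pF pT a c : ℂ) (hz : z * (starRingEnd ℂ) z = 1)
    (hy : y * (starRingEnd ℂ) y = 1)
    (hibc : a - z * c = (1 + z * y) / (2 * Complex.I) * (wF * pF + wT * pT)) :
    2 * Complex.normSq c - 2 * Complex.normSq a
      = 2 * ((starRingEnd ℂ) pF * ((starRingEnd ℂ) (wF * y) * c + (starRingEnd ℂ) wF * a)).im
        + 2 * ((starRingEnd ℂ) pT * ((starRingEnd ℂ) (wT * y) * c + (starRingEnd ℂ) wT * a)).im := by
  have hRHS : (2:ℝ) * ((starRingEnd ℂ) pF * ((starRingEnd ℂ) (wF * y) * c + (starRingEnd ℂ) wF * a)).im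
        + 2 * ((starRingEnd ℂ) pT * ((starRingEnd ℂ) (wT * y) * c + (starRingEnd ℂ) wT * a)).im
      = 2 * ((starRingEnd ℂ) (wF * pF + wT * pT) * (a + (starRingEnd ℂ) y * c)).im := by
    have hexp : (starRingEnd ℂ) (wF * pF + wT * pT) * (a + (starRingEnd ℂ) y * c)
        = (starRingEnd ℂ) pF * ((starRingEnd ℂ) (wF * y) * c + (starRingEnd ℂ) wF * a)
          + (starRingEnd ℂ) pT * ((starRingEnd ℂ) (wT * y) * c + (starRingEnd ℂ) wT * a) := by
      simp only [map_add, map_mul]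
      ring
    rw [hexp, Complex.add_im]
    ring
  rw [hRHS]
  by_cases h : (1 : ℂ) + z * y = 0
  · have ha : a = z * c := by
      rw [h, zero_div, zero_mul] at hibc
      exact sub_eq_zero.mp hibc
    have hzy : z = -(starRingEnd ℂ) y := by
      have h1 : z * (y * (starRingEnd ℂ) y) = -(starRingEnd ℂ) y := by
        have h0 : ((1 : ℂ) + z * y) * (starRingEnd ℂ) y = 0 := by rw [h, zero_mul]
        linear_combination h0
      rwa [hy, mul_one] at h1
    have hv0 : a + (starRingEnd ℂ) y * c = 0 := by rw [ha, hzy]; ring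
    have hnorm : Complex.normSq a = Complex.normSq c := by
      rw [ha, Complex.normSq_mul]
      have hz1 : Complex.normSq z = 1 := by
        have h1 := hz
        rw [Complex.mul_conj] at h1
        exact_mod_cast h1
      rw [hz1, one_mul]
    rw [hv0, mul_zero, Complex.zero_im, hnorm]
    ring
  · have h' : (1 : ℂ) + (starRingEnd ℂ) z * (starRingEnd ℂ) y ≠ 0 := by
      intro h0
      apply h
      have h1 := congrArg (starRingEnd ℂ) h0
      simpa [map_add, map_mul, Complex.conj_conj] using h1
    have hR1 : ((1 : ℂ) + z * y) * (wF * pF + wT * pT) = 2 * Complex.I * (a - z * c) := by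
      rw [hibc]
      have h2I : (2 : ℂ) * Complex.I ≠ 0 := mul_ne_zero two_ne_zero Complex.I_ne_zero
      field_simp
    have hR2 : ((1 : ℂ) + (starRingEnd ℂ) z * (starRingEnd ℂ) y)
          * ((starRingEnd ℂ) (wF * pF + wT * pT))
        = -(2 * Complex.I) * ((starRingEnd ℂ) a - (starRingEnd ℂ) z * (starRingEnd ℂ) c) := by
      have h1 := congrArg (starRingEnd ℂ) hR1
      simp only [map_mul, map_add, map_sub, map_one, map_ofNat, Complex.conj_I] at h1
      have hW'exp : (starRingEnd ℂ) (wF * pF + wT * pT)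
          = (starRingEnd ℂ) wF * (starRingEnd ℂ) pF + (starRingEnd ℂ) wT * (starRingEnd ℂ) pT := by
        simp [map_add, map_mul]
      rw [hW'exp]
      linear_combination h1
    have hca : a * (starRingEnd ℂ) a = (Complex.normSq a : ℂ) := Complex.mul_conj a
    have hcc : c * (starRingEnd ℂ) c = (Complex.normSq c : ℂ) := Complex.mul_conj c
    set W := wF * pF + wT * pT with hWdef
    set W' := (starRingEnd ℂ) W with hW'def
    set z' := (starRingEnd ℂ) z with hz'def
    set y' := (starRingEnd ℂ) y with hy'def
    set a' := (starRingEnd ℂ) a with ha'def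
    set c' := (starRingEnd ℂ) c with hc'def
    set na := (Complex.normSq a : ℂ) with hnadef
    set nc := (Complex.normSq c : ℂ) with hncdef
    have hkey : W' * (a + y' * c) - W * (a' + y * c') = 2 * Complex.I * (nc - na) := by
      apply mul_left_cancel₀ (mul_ne_zero h h')
      rw [show ((1 : ℂ) + z * y) * (1 + z' * y') * (W' * (a + y' * c) - W * (a' + y * c'))
          = (1 + z * y) * ((1 + z' * y') * (W' * (a + y' * c) - W * (a' + y * c'))) from by ring]
      rw [show ((1 : ℂ) + z * y) * (1 + z' * y') * (2 * Complex.I * (nc - na))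
          = (1 + z * y) * ((1 + z' * y') * (2 * Complex.I * (nc - na))) from by ring]
      linear_combination (((1 : ℂ) + z * y) * (a + y' * c)) * hR2
        - (((1 : ℂ) + z' * y') * (a' + y * c')) * hR1
        + ((2 * y' * a' * c + 2 * y * a * c' - 2 * y * y' * nc + 2 * y * y' * na
            + 4 * y * y' * c * c') * Complex.I) * hz
        + ((-2 * nc + 2 * na + 4 * c * c' - 2 * z' * a * c' - 2 * z * a' * c) * Complex.I) * hy
        + ((-(4 : ℂ) - 2 * z' * y' - 2 * z * y) * Complex.I) * hca
        + (((4 : ℂ) + 2 * z' * y' + 2 * z * y) * Complex.I) * hcc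
    have hWv : W * (a' + y * c') = (starRingEnd ℂ) (W' * (a + y' * c)) := by
      rw [map_mul, hW'def, Complex.conj_conj]
      congr 1
      rw [map_add, map_mul, ha'def, hy'def, hc'def, Complex.conj_conj]
    rw [hWv] at hkey
    have him := congrArg Complex.im hkey
    rw [Complex.sub_im, Complex.conj_im] at him
    have hrhs_im : (2 * Complex.I * (nc - na)).im = 2 * (Complex.normSq c - Complex.normSq a) := by
      rw [hnadef, hncdef]
      simp [Complex.mul_im, Complex.mul_re, Complex.sub_re, Complex.sub_im]
    rw [hrhs_im] at him
    have : 2 * (W' * (a + y' * c)).im = 2 * (Complex.normSq c - Complex.normSq a) := by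
      linarith
    linarith

lemma sval_true : sval true = 1 := rfl

lemma sval_false : sval false = -1 := rfl

lemma pairIns_update {n : ℕ} {α : Type*} (k : Fin n) (s : Fin n → α) (b t u : α) :
    pairIns k (Function.update s k b) t u = pairIns k s t u := by
  unfold pairIns; rw [Function.update_idem]

lemma insertNth_update {n : ℕ} {α : Type*} (k : Fin n) (s : Fin n → α) (t b : α) :
    Fin.insertNth k.castSucc t (Function.update s k b) = pairIns k s t b := rfl

/-- The interior-boundary conditions of the massless N-sector model
imply local probability conservation of the tensor currents in coordinates
(Theorem 5 of the paper). -/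
theorem ibc_implies_local_probability_conservation
    (N : ℕ) (hN : 2 ≤ N) (θ : ℝ)
    (A : Bool → Bool × Bool → ℂ) (hA : IBCform A)
    (ψ : (n : ℕ) → (Fin n → ℝ × ℝ) → (Fin n → Bool) → ℂ)
    (hreg : ∀ n, 1 ≤ n → n ≤ N → ∀ s : Fin n → Bool,
      ContDiffOn ℝ 1 (fun x => ψ n x s) (closure (Sconf n)))
    -- the multi-time equations with the model source terms, for n < N …
    (heq : ∀ n, 1 ≤ n → n < N → ∀ (k : Fin n) (s : Fin n → Bool), ∀ x ∈ Sconf n,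
      Complex.I * (dT (closure (Sconf n)) (fun y => ψ n y s) k x
          - (sval (s k) : ℂ) * dZ (closure (Sconf n)) (fun y => ψ n y s) k x)
        = (-1 : ℂ) ^ ((k : ℕ) + 1) *
            ∑ t : Bool, ∑ u : Bool,
              A (s k) (t, u) * ψ (n + 1) (double k x) (pairIns k s t u))
    -- … and with f⁽ᴺ⁾ = 0 in the top sector
    (heqN : ∀ (k : Fin N) (s : Fin N → Bool), ∀ x ∈ Sconf N,
      Complex.I * (dT (closure (Sconf N)) (fun y => ψ N y s) k x
          - (sval (s k) : ℂ) * dZ (closure (Sconf N)) (fun y => ψ N y s) k x) = 0)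
    -- the interior-boundary conditions
    (hibc : ∀ n, 1 ≤ n → n < N → ∀ (k : Fin n) (s : Fin n → Bool),
      ∀ x ∈ closure (Sconf n),
        ψ (n + 1) (double k x) (pairIns k s false true)
            - Complex.exp (θ * Complex.I) * ψ (n + 1) (double k x) (pairIns k s true false)
          = ∑ b : Bool, Bof θ A b * ψ n x (Function.update s k b)) :
    -- (i) conservation of the top-sector current
    (∀ (k : Fin N) (μ : Fin N → Bool), ∀ x ∈ Sconf N,
        dT (closure (Sconf N)) (current (ψ N) (Function.update μ k false)) k x
          + dZ (closure (Sconf N)) (current (ψ N) (Function.update μ k true)) k x = 0)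
      -- (ii) detailed balance between sectors n and n+1
      ∧ ∀ n, 1 ≤ n → n < N → ∀ (k : Fin n) (μ : Fin n → Bool), ∀ x ∈ Sconf n,
          current (ψ (n + 1)) (pairIns k μ false true) (double k x)
              - current (ψ (n + 1)) (pairIns k μ true false) (double k x)
            = (-1 : ℝ) ^ ((k : ℕ) + 1) *
                (dT (closure (Sconf n)) (current (ψ n) (Function.update μ k false)) k x
                  + dZ (closure (Sconf n)) (current (ψ n) (Function.update μ k true)) k x) := by
  obtain ⟨hAdiag, w₁, w₂, φ, hw1, hw2, hw3, hw4⟩ := hA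
  constructor
  · -- part (i)
    intro k μ x hx
    have hreg' : ∀ s : Fin N → Bool, ContDiffOn ℝ 1 (fun y => ψ N y s) (closure (Sconf N)) :=
      fun s => hreg N (by omega) le_rfl s
    simp only [dT, dZ]
    rw [deriv_current_eval (ψ N) hreg' _ hx _ k, deriv_current_eval (ψ N) hreg' _ hx _ k,
      ← Finset.sum_add_distrib]
    refine Finset.sum_eq_zero fun s _ => ?_
    have h0 := heqN k s x hx
    simp only [dT, dZ] at h0
    have hD : fderivWithin ℝ (fun y => ψ N y s) (closure (Sconf N)) x
          (Pi.single k ((1 : ℝ), (0 : ℝ)))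
        = (sval (s k) : ℂ) * fderivWithin ℝ (fun y => ψ N y s) (closure (Sconf N)) x
          (Pi.single k ((0 : ℝ), (1 : ℝ))) := by
      rcases mul_eq_zero.mp h0 with h | h
      · exact absurd h Complex.I_ne_zero
      · linear_combination h
    rw [prod_if_update, prod_if_update, hD,
      mul_left_comm ((starRingEnd ℂ) (ψ N x s)) ((sval (s k) : ℂ)), re_ofReal_mul']
    simp only [Bool.false_eq_true, if_false, if_true, one_mul]
    ring
  · -- part (ii)
    intro n hn1 hnN k μ x hx
    have hreg' : ∀ s : Fin n → Bool, ContDiffOn ℝ 1 (fun y => ψ n y s) (closure (Sconf n)) :=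
      fun s => hreg n hn1 (le_of_lt hnN) s
    have hder : dT (closure (Sconf n)) (current (ψ n) (Function.update μ k false)) k x
        + dZ (closure (Sconf n)) (current (ψ n) (Function.update μ k true)) k x
        = ∑ s : Fin n → Bool,
            (∏ i ∈ Finset.univ.erase k, (if μ i then -(sval (s i)) else 1)) *
            (2 * ((starRingEnd ℂ) (ψ n x s) *
              (fderivWithin ℝ (fun y => ψ n y s) (closure (Sconf n)) x
                  (Pi.single k ((1 : ℝ), (0 : ℝ)))
                - (sval (s k) : ℂ) * fderivWithin ℝ (fun y => ψ n y s) (closure (Sconf n)) x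
                  (Pi.single k ((0 : ℝ), (1 : ℝ))))).re) := by
      simp only [dT, dZ]
      rw [deriv_current_eval (ψ n) hreg' _ hx _ k, deriv_current_eval (ψ n) hreg' _ hx _ k,
        ← Finset.sum_add_distrib]
      refine Finset.sum_congr rfl fun s _ => ?_
      rw [prod_if_update, prod_if_update, mul_sub, Complex.sub_re,
        mul_left_comm ((starRingEnd ℂ) (ψ n x s)) ((sval (s k) : ℂ)), re_ofReal_mul']
      simp only [Bool.false_eq_true, if_false, if_true, one_mul]
      ring
    have hPDE : ∀ s : Fin n → Bool,
        fderivWithin ℝ (fun y => ψ n y s) (closure (Sconf n)) x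
            (Pi.single k ((1 : ℝ), (0 : ℝ)))
          - (sval (s k) : ℂ) * fderivWithin ℝ (fun y => ψ n y s) (closure (Sconf n)) x
            (Pi.single k ((0 : ℝ), (1 : ℝ)))
        = -Complex.I * ((-1 : ℂ) ^ ((k : ℕ) + 1) *
            ∑ t : Bool, ∑ u : Bool, A (s k) (t, u) * ψ (n + 1) (double k x) (pairIns k s t u)) := by
      intro s
      have h0 := heq n hn1 hnN k s x hx
      simp only [dT, dZ] at h0
      linear_combination (-Complex.I) * h0
        + (fderivWithin ℝ (fun y => ψ n y s) (closure (Sconf n)) x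
              (Pi.single k ((1 : ℝ), (0 : ℝ)))
            - (sval (s k) : ℂ) * fderivWithin ℝ (fun y => ψ n y s) (closure (Sconf n)) x
              (Pi.single k ((0 : ℝ), (1 : ℝ)))) * Complex.I_mul_I
    have hsq : (-1 : ℝ) ^ ((k : ℕ) + 1) * (-1 : ℝ) ^ ((k : ℕ) + 1) = 1 := by
      rw [← pow_add]; exact Even.neg_one_pow ⟨(k : ℕ) + 1, rfl⟩
    have hRHS : (-1 : ℝ) ^ ((k : ℕ) + 1) *
          (dT (closure (Sconf n)) (current (ψ n) (Function.update μ k false)) k x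
            + dZ (closure (Sconf n)) (current (ψ n) (Function.update μ k true)) k x)
        = ∑ s : Fin n → Bool,
            (∏ i ∈ Finset.univ.erase k, (if μ i then -(sval (s i)) else 1)) *
            (2 * ((starRingEnd ℂ) (ψ n x s) *
              ∑ t : Bool, ∑ u : Bool,
                A (s k) (t, u) * ψ (n + 1) (double k x) (pairIns k s t u)).im) := by
      rw [hder, Finset.mul_sum]
      refine Finset.sum_congr rfl fun s _ => ?_
      rw [hPDE s]
      have h1 : (starRingEnd ℂ) (ψ n x s) * (-Complex.I * ((-1 : ℂ) ^ ((k : ℕ) + 1) *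
            ∑ t : Bool, ∑ u : Bool, A (s k) (t, u) * ψ (n + 1) (double k x) (pairIns k s t u)))
          = (((-1 : ℝ) ^ ((k : ℕ) + 1) : ℝ) : ℂ) * (-(Complex.I * ((starRingEnd ℂ) (ψ n x s) *
            ∑ t : Bool, ∑ u : Bool,
              A (s k) (t, u) * ψ (n + 1) (double k x) (pairIns k s t u)))) := by
        push_cast
        ring
      rw [h1, re_ofReal_mul']
      have h2 : ∀ w : ℂ, (-(Complex.I * w)).re = w.im := fun w => by
        simp [Complex.mul_re]
      rw [h2]
      linear_combination (2 * (∏ i ∈ Finset.univ.erase k, (if μ i then -(sval (s i)) else 1)) *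
        ((starRingEnd ℂ) (ψ n x s) *
          ∑ t : Bool, ∑ u : Bool,
            A (s k) (t, u) * ψ (n + 1) (double k x) (pairIns k s t u)).im) * hsq
    have hLHS : current (ψ (n + 1)) (pairIns k μ false true) (double k x)
        - current (ψ (n + 1)) (pairIns k μ true false) (double k x)
        = ∑ s : Fin n → Bool,
            (∏ i ∈ Finset.univ.erase k, (if μ i then -(sval (s i)) else 1)) *
            (∑ t : Bool, Complex.normSq (ψ (n + 1) (double k x) (Fin.insertNth k.castSucc t s))
              * (sval t - sval (s k))) := by
      simp only [current]
      rw [sum_pair_expand (ψ (n + 1) (double k x)) k μ false true,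
        sum_pair_expand (ψ (n + 1) (double k x)) k μ true false,
        ← Finset.sum_sub_distrib]
      refine Finset.sum_congr rfl fun s _ => ?_
      rw [← Finset.sum_sub_distrib, Finset.mul_sum]
      refine Finset.sum_congr rfl fun t _ => ?_
      simp only [Bool.false_eq_true, if_false, if_true, one_mul, mul_one]
      ring
    rw [hLHS, hRHS]
    have hA1 : A false (false, true) = (starRingEnd ℂ) w₁ := by
      have h := congrArg (starRingEnd ℂ) hw1; rwa [Complex.conj_conj] at h
    have hA2 : A true (false, true) = (starRingEnd ℂ) w₂ := by
      have h := congrArg (starRingEnd ℂ) hw2; rwa [Complex.conj_conj] at h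
    have hA3 : A false (true, false) = (starRingEnd ℂ) (w₁ * Complex.exp (φ * Complex.I)) := by
      have h := congrArg (starRingEnd ℂ) hw3; rwa [Complex.conj_conj] at h
    have hA4 : A true (true, false) = (starRingEnd ℂ) (w₂ * Complex.exp (φ * Complex.I)) := by
      have h := congrArg (starRingEnd ℂ) hw4; rwa [Complex.conj_conj] at h
    have hz : Complex.exp (θ * Complex.I) * (starRingEnd ℂ) (Complex.exp (θ * Complex.I)) = 1 := by
      rw [← Complex.exp_conj, ← Complex.exp_add]
      have hc : (starRingEnd ℂ) ((θ : ℂ) * Complex.I) = -((θ : ℂ) * Complex.I) := by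
        simp [map_mul, Complex.conj_ofReal, Complex.conj_I]
      rw [hc, add_neg_cancel, Complex.exp_zero]
    have hy : Complex.exp (φ * Complex.I) * (starRingEnd ℂ) (Complex.exp (φ * Complex.I)) = 1 := by
      rw [← Complex.exp_conj, ← Complex.exp_add]
      have hc : (starRingEnd ℂ) ((φ : ℂ) * Complex.I) = -((φ : ℂ) * Complex.I) := by
        simp [map_mul, Complex.conj_ofReal, Complex.conj_I]
      rw [hc, add_neg_cancel, Complex.exp_zero]
    refine mul_left_cancel₀ (two_ne_zero) ?_
    rw [sum_double k, sum_double k]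
    refine Finset.sum_congr rfl fun s _ => ?_
    have hib : ψ (n + 1) (double k x) (pairIns k s false true)
        - Complex.exp (θ * Complex.I) * ψ (n + 1) (double k x) (pairIns k s true false)
        = (1 + Complex.exp (θ * Complex.I) * Complex.exp (φ * Complex.I)) / (2 * Complex.I)
          * (w₁ * ψ n x (Function.update s k false) + w₂ * ψ n x (Function.update s k true)) := by
      have h0 := hibc n hn1 hnN k s x (subset_closure hx)
      rw [Fintype.sum_bool] at h0
      simp only [Bof, hw1, hw2, hw3, hw4] at h0
      linear_combination h0
    have hgroup := core_identity (Complex.exp (θ * Complex.I)) (Complex.exp (φ * Complex.I))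
      w₁ w₂ (ψ n x (Function.update s k false)) (ψ n x (Function.update s k true))
      (ψ (n + 1) (double k x) (pairIns k s false true))
      (ψ (n + 1) (double k x) (pairIns k s true false)) hz hy hib
    simp only [Fintype.sum_bool, Function.update_self, prod_erase_update, pairIns_update,
      insertNth_update, hAdiag, hA1, hA2, hA3, hA4, sval_true, sval_false, zero_mul, add_zero,
      zero_add, mul_zero]
    linear_combination ((∏ i ∈ Finset.univ.erase k, (if μ i then -(sval (s i)) else 1))) * hgroup
end
end
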